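/- Let M > 0 and L > 2√6·M. Define Ω(x) = W(1/x; −1/2, L) + ω₀, where W(r; −1/2, L) = ½(L²/r² + 1)(1 − 2M/r) and ω₀ is chosen so that Ω vanishes at x₀ = 1/r₀ with r₀ the minimum point of W. Then the second derivative of Ω at x₀ equals M²·(L/M)·√((L/M)² − 12), the third derivative equals −6M³·(L/M)², and the fourth derivative equals 0. -/

import Mathlib

open Real

private lemma cubic_deriv (a b c d : ℝ) :
    deriv (fun x : ℝ => a*x^3 + b*x^2 + c*x + d) = fun x => 3*a*x^2 + 2*b*x + c := by
  funext x
  have h : HasDerivAt (fun x : ℝ => a*x^3 + b*x^2 + c*x + d) (3*a*x^2 + 2*b*x + c) x := by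
    have := (((hasDerivAt_pow 3 x).const_mul a).add ((hasDerivAt_pow 2 x).const_mul b)).add
      (((hasDerivAt_id x).const_mul c).add (hasDerivAt_const x d))
    convert this using 1
    all_goals try funext t
    all_goals try simp only [id_eq]
    all_goals try rfl
    all_goals try simp only [Pi.add_apply]
    all_goals push_cast
    all_goals ring
  exact h.deriv

private lemma quad_deriv (a b c : ℝ) :
    deriv (fun x : ℝ => a*x^2 + b*x + c) = fun x => 2*a*x + b := by
  funext x
  have h : HasDerivAt (fun x : ℝ => a*x^2 + b*x + c) (2*a*x + b) x := by
    have := ((hasDerivAt_pow 2 x).const_mul a).add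
      (((hasDerivAt_id x).const_mul b).add (hasDerivAt_const x c))
    convert this using 1
    all_goals try funext t
    all_goals try simp only [id_eq]
    all_goals try rfl
    all_goals try simp only [Pi.add_apply]
    all_goals push_cast
    all_goals ring
  exact h.deriv

private lemma lin_deriv (a b : ℝ) :
    deriv (fun x : ℝ => a*x + b) = fun _ => a := by
  funext x
  have h : HasDerivAt (fun x : ℝ => a*x + b) a x := by
    have := ((hasDerivAt_id x).const_mul a).add (hasDerivAt_const x b)
    convert this using 1
    all_goals try funext t
    all_goals try simp only [id_eq]
    all_goals try rfl
    all_goals ring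
  exact h.deriv

private lemma const_deriv (a : ℝ) : deriv (fun _ : ℝ => a) = fun _ => (0:ℝ) := by
  funext x; exact (hasDerivAt_const x a).deriv

private lemma cubic_iter2 (a b c d y : ℝ) :
    iteratedDeriv 2 (fun x : ℝ => a*x^3 + b*x^2 + c*x + d) y = 6*a*y + 2*b := by
  rw [iteratedDeriv_succ, iteratedDeriv_one, cubic_deriv]
  have : deriv (fun x : ℝ => 3*a*x^2 + 2*b*x + c) = fun x => 2*(3*a)*x + 2*b := quad_deriv _ _ _
  rw [this]; ring

private lemma cubic_iter3 (a b c d y : ℝ) :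
    iteratedDeriv 3 (fun x : ℝ => a*x^3 + b*x^2 + c*x + d) y = 6*a := by
  rw [iteratedDeriv_succ, iteratedDeriv_succ, iteratedDeriv_one, cubic_deriv, quad_deriv]
  have : deriv (fun x : ℝ => (2*(3*a))*x + (2*b)) = fun _ => 2*(3*a) := lin_deriv _ _
  simp only [show (fun x : ℝ => 2*(3*a)*x + 2*b) = (fun x : ℝ => (2*(3*a))*x + (2*b)) by rfl, this]
  ring

private lemma cubic_iter4 (a b c d y : ℝ) :
    iteratedDeriv 4 (fun x : ℝ => a*x^3 + b*x^2 + c*x + d) y = 0 := by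
  rw [iteratedDeriv_succ, iteratedDeriv_succ, iteratedDeriv_succ, iteratedDeriv_one,
    cubic_deriv, quad_deriv]
  have h1 : deriv (fun x : ℝ => (2*(3*a))*x + (2*b)) = fun _ => 2*(3*a) := lin_deriv _ _
  simp only [show (fun x : ℝ => 2*(3*a)*x + 2*b) = (fun x : ℝ => (2*(3*a))*x + (2*b)) by rfl, h1,
    const_deriv]

/-- Derivatives at the minimum of the inverted-radius Schwarzschild effective potential
at energy H = −1/2: the second derivative equals M²(L/M)√((L/M)² − 12), the third equals
−6M³(L/M)², and the fourth vanishes. -/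
theorem schwarzschild_inverted_potential_derivs
    (M L : ℝ) (hM : 0 < M) (hL : 2 * Real.sqrt 6 * M < L) :
    iteratedDeriv 2
        (fun x : ℝ => (1 / 2) * (L ^ 2 * x ^ 2 + 1) * (1 - 2 * M * x) -
          ((1 / 2) * (L ^ 2 / ((L ^ 2 + L * Real.sqrt (L ^ 2 - 12 * M ^ 2)) / (2 * M)) ^ 2 + 1) *
            (1 - 2 * M / ((L ^ 2 + L * Real.sqrt (L ^ 2 - 12 * M ^ 2)) / (2 * M)))))
        (1 / ((L ^ 2 + L * Real.sqrt (L ^ 2 - 12 * M ^ 2)) / (2 * M))) =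
      M ^ 2 * (L / M) * Real.sqrt ((L / M) ^ 2 - 12) ∧
    iteratedDeriv 3
        (fun x : ℝ => (1 / 2) * (L ^ 2 * x ^ 2 + 1) * (1 - 2 * M * x) -
          ((1 / 2) * (L ^ 2 / ((L ^ 2 + L * Real.sqrt (L ^ 2 - 12 * M ^ 2)) / (2 * M)) ^ 2 + 1) *
            (1 - 2 * M / ((L ^ 2 + L * Real.sqrt (L ^ 2 - 12 * M ^ 2)) / (2 * M)))))
        (1 / ((L ^ 2 + L * Real.sqrt (L ^ 2 - 12 * M ^ 2)) / (2 * M))) =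
      -6 * M ^ 3 * (L / M) ^ 2 ∧
    iteratedDeriv 4
        (fun x : ℝ => (1 / 2) * (L ^ 2 * x ^ 2 + 1) * (1 - 2 * M * x) -
          ((1 / 2) * (L ^ 2 / ((L ^ 2 + L * Real.sqrt (L ^ 2 - 12 * M ^ 2)) / (2 * M)) ^ 2 + 1) *
            (1 - 2 * M / ((L ^ 2 + L * Real.sqrt (L ^ 2 - 12 * M ^ 2)) / (2 * M)))))
        (1 / ((L ^ 2 + L * Real.sqrt (L ^ 2 - 12 * M ^ 2)) / (2 * M))) = 0 := by
  set s := Real.sqrt (L ^ 2 - 12 * M ^ 2) with hs_def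
  set C : ℝ := (1 / 2) * (L ^ 2 / ((L ^ 2 + L * s) / (2 * M)) ^ 2 + 1) *
      (1 - 2 * M / ((L ^ 2 + L * s) / (2 * M))) with hC
  have hL0 : 0 < L := lt_trans (by positivity) hL
  have hD : 0 < L ^ 2 - 12 * M ^ 2 := by
    have h6 : Real.sqrt 6 ^ 2 = 6 := Real.sq_sqrt (by norm_num)
    have hpos : 0 < L + 2 * Real.sqrt 6 * M := by positivity
    nlinarith [mul_pos (sub_pos.mpr hL) hpos, sq_nonneg M]
  have hs2 : s ^ 2 = L ^ 2 - 12 * M ^ 2 := Real.sq_sqrt hD.le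
  have hs0 : 0 ≤ s := Real.sqrt_nonneg _
  have hden : 0 < L ^ 2 + L * s := by positivity
  have hfun : (fun x : ℝ => (1 / 2) * (L ^ 2 * x ^ 2 + 1) * (1 - 2 * M * x) - C) =
      fun x : ℝ => (-(M * L ^ 2))*x^3 + (L ^ 2 / 2)*x^2 + (-M)*x + (1/2 - C) := by
    funext x; ring
  set y : ℝ := 1 / ((L ^ 2 + L * s) / (2 * M)) with hy
  refine ⟨?_, ?_, ?_⟩
  · rw [hfun, cubic_iter2]
    have hrhs : Real.sqrt ((L / M) ^ 2 - 12) = s / M := by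
      rw [show (L / M) ^ 2 - 12 = (L ^ 2 - 12 * M ^ 2) / M ^ 2 by field_simp,
        Real.sqrt_div hD.le, Real.sqrt_sq hM.le]
    rw [hrhs, hy]
    field_simp
    linear_combination (-1) * hs2
  · rw [hfun, cubic_iter3]
    field_simp
  · rw [hfun, cubic_iter4]
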